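/- arXiv:2305.05387 — 15 statements merged into one kernel-verified Lean document; each statement's English description precedes it below -/
import Mathlib

section
/- Let M be a graded A-module, g ∈ G such that every A_e-submodule of M_g is faithful, and K a g-classical weakly prime A-submodule of M. If L is an A_e-submodule of M_g, x ∈ A_e, and I is an ideal of A_e with 0 ≠ xIL ⊆ K, then xL ⊆ K or IL ⊆ K. -/
section GCWP

variable {G : Type*} [AddGroup G] [DecidableEq G]
variable {A : Type*} [Ring A] {M : Type*} [AddCommGroup M] [Module A M]

/-- A submodule is graded (homogeneous) if it is generated by its homogeneous elements. -/
def IsGrSub (ℳ : G → AddSubgroup M) (K : Submodule A M) : Prop :=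
  K ≤ Submodule.span A ((K : Set M) ∩ {m | SetLike.IsHomogeneousElem ℳ m})

/-- `K` is a graded classical weakly prime submodule. -/
def IsGCWP (𝒜 : G → AddSubgroup A) (ℳ : G → AddSubgroup M) (K : Submodule A M) : Prop :=
  K ≠ ⊤ ∧ IsGrSub ℳ K ∧
  ∀ x y : A, SetLike.IsHomogeneousElem 𝒜 x → SetLike.IsHomogeneousElem 𝒜 y →
    ∀ L : Submodule A M, IsGrSub ℳ L →
      (∃ a : A, ∃ l ∈ L, (x * a * y) • l ≠ 0) →
      (∀ a : A, ∀ l ∈ L, (x * a * y) • l ∈ K) →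
      (∀ l ∈ L, x • l ∈ K) ∨ (∀ l ∈ L, y • l ∈ K)

/-- `K` is a graded classical prime submodule. -/
def IsGCP (𝒜 : G → AddSubgroup A) (ℳ : G → AddSubgroup M) (K : Submodule A M) : Prop :=
  K ≠ ⊤ ∧ IsGrSub ℳ K ∧
  ∀ x y : A, SetLike.IsHomogeneousElem 𝒜 x → SetLike.IsHomogeneousElem 𝒜 y →
    ∀ L : Submodule A M, IsGrSub ℳ L →
      (∀ a : A, ∀ l ∈ L, (x * a * y) • l ∈ K) →
      (∀ l ∈ L, x • l ∈ K) ∨ (∀ l ∈ L, y • l ∈ K)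

/-- `(x, y, L)` is a graded classical triple zero of `K`. -/
def TripleZero (K : Submodule A M) (x y : A) (L : Submodule A M) : Prop :=
  (∀ a : A, ∀ l ∈ L, (x * a * y) • l = 0) ∧
    ¬ (∀ l ∈ L, x • l ∈ K) ∧ ¬ (∀ l ∈ L, y • l ∈ K)

/-- `L` is an `A_e`-submodule of `M_g` (as an additive subgroup of `M`). -/
def IsAeSub (𝒜 : G → AddSubgroup A) (ℳ : G → AddSubgroup M) (g : G) (L : AddSubgroup M) : Prop :=
  (L : Set M) ⊆ (ℳ g : Set M) ∧ ∀ a ∈ 𝒜 0, ∀ l ∈ L, a • l ∈ L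

/-- `L` is a faithful `A_e`-module. -/
def AeFaithful (𝒜 : G → AddSubgroup A) (L : AddSubgroup M) : Prop :=
  ∀ a ∈ 𝒜 0, (∀ l ∈ L, a • l = 0) → a = 0

/-- `I` is an ideal of `A_e` (as an additive subgroup of `A`). -/
def IsAeIdeal (𝒜 : G → AddSubgroup A) (I : AddSubgroup A) : Prop :=
  (I : Set A) ⊆ (𝒜 0 : Set A) ∧ ∀ a ∈ 𝒜 0, ∀ r ∈ I, a * r ∈ I ∧ r * a ∈ I

/-- `K` is a `g`-classical weakly prime submodule of `M`. -/
def IsgCWP (𝒜 : G → AddSubgroup A) (ℳ : G → AddSubgroup M) (g : G) (K : Submodule A M) :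
    Prop :=
  IsGrSub ℳ K ∧ ¬ ((ℳ g : Set M) ⊆ (K : Set M)) ∧
  ∀ x ∈ 𝒜 0, ∀ y ∈ 𝒜 0, ∀ L : AddSubgroup M, IsAeSub 𝒜 ℳ g L →
    (∃ a ∈ 𝒜 0, ∃ l ∈ L, (x * a * y) • l ≠ 0) →
    (∀ a ∈ 𝒜 0, ∀ l ∈ L, (x * a * y) • l ∈ K) →
    (∀ l ∈ L, x • l ∈ K) ∨ (∀ l ∈ L, y • l ∈ K)

/-- `P` is a weakly prime (proper) left ideal of `A_e`, given as a subset of `A`. -/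
def IsWeaklyPrimeAe (𝒜 : G → AddSubgroup A) (P : Set A) : Prop :=
  P ⊆ (𝒜 0 : Set A) ∧ ¬ ((𝒜 0 : Set A) ⊆ P) ∧
  (0 : A) ∈ P ∧ (∀ p ∈ P, ∀ q ∈ P, p + q ∈ P) ∧ (∀ p ∈ P, -p ∈ P) ∧
  (∀ a ∈ 𝒜 0, ∀ p ∈ P, a * p ∈ P) ∧
  ∀ I J : AddSubgroup A, IsAeIdeal 𝒜 I → IsAeIdeal 𝒜 J →
    (∃ i ∈ I, ∃ j ∈ J, i * j ≠ 0) → (∀ i ∈ I, ∀ j ∈ J, i * j ∈ P) →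
    (I : Set A) ⊆ P ∨ (J : Set A) ⊆ P

end GCWP

section GW2A
variable {G : Type*} [AddGroup G] [DecidableEq G]
variable {A : Type*} [Ring A] {M : Type*} [AddCommGroup M] [Module A M]

/-- `K` is a graded weakly 2-absorbing submodule. -/
def IsGW2A (𝒜 : G → AddSubgroup A) (ℳ : G → AddSubgroup M) (K : Submodule A M) : Prop :=
  K ≠ ⊤ ∧ IsGrSub ℳ K ∧
  ∀ x y : A, SetLike.IsHomogeneousElem 𝒜 x → SetLike.IsHomogeneousElem 𝒜 y →
    ∀ L : Submodule A M, IsGrSub ℳ L →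
      (∃ a : A, ∃ l ∈ L, (x * a * y) • l ≠ 0) →
      (∀ a : A, ∀ l ∈ L, (x * a * y) • l ∈ K) →
      (∀ l ∈ L, x • l ∈ K) ∨ (∀ l ∈ L, y • l ∈ K) ∨
        (∀ a : A, ∀ m : M, (x * a * y) • m ∈ K)

end GW2A

section Theorems

variable {G : Type*} [AddGroup G] [DecidableEq G]
variable {A : Type*} [Ring A] {M : Type*} [AddCommGroup M] [Module A M]
variable (𝒜 : G → AddSubgroup A) (ℳ : G → AddSubgroup M)
variable [SetLike.GradedMonoid 𝒜] [SetLike.GradedSMul 𝒜 ℳ]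
variable [DirectSum.Decomposition 𝒜] [DirectSum.Decomposition ℳ]

theorem stmt1 (g : G) (K : Submodule A M)
    (hfaith : ∀ L : AddSubgroup M, IsAeSub 𝒜 ℳ g L → AeFaithful 𝒜 L)
    (hK : IsgCWP 𝒜 ℳ g K)
    (L : AddSubgroup M) (hL : IsAeSub 𝒜 ℳ g L)
    (x : A) (hx : x ∈ 𝒜 0) (I : AddSubgroup A) (hI : IsAeIdeal 𝒜 I)
    (hne : ∃ r ∈ I, ∃ l ∈ L, (x * r) • l ≠ 0)
    (hsub : ∀ r ∈ I, ∀ l ∈ L, (x * r) • l ∈ K) :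
    (∀ l ∈ L, x • l ∈ K) ∨ (∀ r ∈ I, ∀ l ∈ L, r • l ∈ K) := by
  by_cases hxL : ∀ l ∈ L, x • l ∈ K
  · exact Or.inl hxL
  right
  obtain ⟨r₀, hr₀, l₀, hl₀, hne₀⟩ := hne
  have hone : (1 : A) ∈ 𝒜 0 := SetLike.one_mem_graded _
  -- main step: for any s ∈ I such that x * a * s acts nontrivially on L for some a ∈ 𝒜 0,
  -- we get s • L ⊆ K
  have key : ∀ s ∈ I, (∃ a ∈ 𝒜 0, ∃ l ∈ L, (x * a * s) • l ≠ 0) →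
      ∀ l ∈ L, s • l ∈ K := by
    intro s hs hex
    have hmem : ∀ a ∈ 𝒜 0, ∀ l ∈ L, (x * a * s) • l ∈ K := by
      intro a ha l hl
      have : a * s ∈ I := (hI.2 a ha s hs).1
      have h2 := hsub (a * s) this l hl
      rwa [← mul_assoc] at h2
    rcases hK.2.2 x hx s (hI.1 hs) L hL hex hmem with h | h
    · exact absurd h hxL
    · exact h
  -- r₀ works with a = 1
  have hex₀ : ∃ a ∈ 𝒜 0, ∃ l ∈ L, (x * a * r₀) • l ≠ 0 := by
    refine ⟨1, hone, l₀, hl₀, ?_⟩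
    rwa [mul_one]
  have hr₀K : ∀ l ∈ L, r₀ • l ∈ K := key r₀ hr₀ hex₀
  intro r hr l hl
  by_cases hex : ∃ a ∈ 𝒜 0, ∃ l ∈ L, (x * a * r) • l ≠ 0
  · exact key r hr hex l hl
  · -- x * a * r kills L for all a ∈ 𝒜 0; use r + r₀
    push_neg at hex
    have h0 : ∀ a ∈ 𝒜 0, ∀ l ∈ L, (x * a * r) • l = 0 := hex
    have hs : r + r₀ ∈ I := I.add_mem hr hr₀
    have hex' : ∃ a ∈ 𝒜 0, ∃ l ∈ L, (x * a * (r + r₀)) • l ≠ 0 := by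
      refine ⟨1, hone, l₀, hl₀, ?_⟩
      rw [mul_one, mul_add, add_smul]
      have hz : (x * r) • l₀ = 0 := by
        have := h0 1 hone l₀ hl₀
        rwa [mul_one] at this
      rw [hz, zero_add]
      exact hne₀
    have hsum : ∀ l ∈ L, (r + r₀) • l ∈ K := key (r + r₀) hs hex'
    have : r • l = (r + r₀) • l - r₀ • l := by rw [add_smul]; abel
    rw [this]
    exact K.sub_mem (hsum l hl) (hr₀K l hl)

end Theorems
end

section
/- Let M and S be G-graded A-modules and f : M → S an injective graded A-homomorphism. If K is a graded classical weakly prime A-submodule of S with f⁻¹(K) ≠ M, then f⁻¹(K) is a graded classical weakly prime A-submodule of M. -/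
section Aux
variable {G : Type*} [AddGroup G] [DecidableEq G]
variable {A : Type*} [Ring A] {S : Type*} [AddCommGroup S] [Module A S]
variable (𝒜 : G → AddSubgroup A) (𝒮 : G → AddSubgroup S)
variable [SetLike.GradedSMul 𝒜 𝒮] [DirectSum.Decomposition 𝒜] [DirectSum.Decomposition 𝒮]

noncomputable def compHom (g : G) : S →+ S :=
  ((𝒮 g).subtype.comp (DFinsupp.evalAddMonoidHom g)).comp
    (DirectSum.decomposeAddEquiv 𝒮).toAddMonoidHom

lemma compHom_apply (g : G) (s : S) : compHom 𝒮 g s = (DirectSum.decompose 𝒮 s g : S) := rfl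

include 𝒜 in
lemma compInK (K : Submodule A S)
    (hK : K ≤ Submodule.span A ((K : Set S) ∩ {m | SetLike.IsHomogeneousElem 𝒮 m}))
    {s : S} (hs : s ∈ K) (g : G) :
    (DirectSum.decompose 𝒮 s g : S) ∈ K := by
  classical
  refine Submodule.span_induction (p := fun t _ => ∀ g : G, (DirectSum.decompose 𝒮 t g : S) ∈ K)
    ?_ ?_ ?_ ?_ (hK hs) g
  · rintro t ⟨htK, h, hth⟩ g
    by_cases hgh : g = h
    · subst hgh; rwa [DirectSum.decompose_of_mem_same 𝒮 hth]
    · rw [DirectSum.decompose_of_mem_ne 𝒮 hth (fun e => hgh e.symm)]; exact K.zero_mem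
  · intro g; rw [← compHom_apply, map_zero]; exact K.zero_mem
  · intro t u _ _ ht hu g
    rw [← compHom_apply, map_add]
    exact K.add_mem (ht g) (hu g)
  · intro a t _ ht g
    have key : a • t = ∑ i ∈ (DirectSum.decompose 𝒜 a).support,
        ∑ h ∈ (DirectSum.decompose 𝒮 t).support,
          (DirectSum.decompose 𝒜 a i : A) • (DirectSum.decompose 𝒮 t h : S) := by
      conv_lhs => rw [← DirectSum.sum_support_decompose 𝒜 a,
        ← DirectSum.sum_support_decompose 𝒮 t]
      rw [Finset.sum_smul]
      exact Finset.sum_congr rfl fun i _ => Finset.smul_sum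
    rw [← compHom_apply, key, map_sum]
    refine K.sum_mem fun i _ => ?_
    rw [map_sum]
    refine K.sum_mem fun h _ => ?_
    rw [compHom_apply]
    have hmem : (DirectSum.decompose 𝒜 a i : A) • (DirectSum.decompose 𝒮 t h : S) ∈ 𝒮 (i + h) :=
      SetLike.GradedSMul.smul_mem (DirectSum.decompose 𝒜 a i).2 (DirectSum.decompose 𝒮 t h).2
    by_cases hg : i + h = g
    · rw [← hg, DirectSum.decompose_of_mem_same 𝒮 hmem]
      exact K.smul_mem _ (ht h)
    · rw [DirectSum.decompose_of_mem_ne 𝒮 hmem hg]; exact K.zero_mem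

end Aux

section Aux2
variable {G : Type*} [AddGroup G] [DecidableEq G]
variable {A : Type*} [Ring A] {M : Type*} [AddCommGroup M] [Module A M]
variable {S : Type*} [AddCommGroup S] [Module A S]
variable (ℳ : G → AddSubgroup M) (𝒮 : G → AddSubgroup S)
variable [DirectSum.Decomposition ℳ] [DirectSum.Decomposition 𝒮]

lemma map_decompose (f : M →ₗ[A] S) (hgr : ∀ g : G, ∀ m ∈ ℳ g, f m ∈ 𝒮 g) (m : M) (g : G) :
    (DirectSum.decompose 𝒮 (f m) g : S) = f (DirectSum.decompose ℳ m g : M) := by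
  classical
  conv_lhs => rw [← DirectSum.sum_support_decompose ℳ m]
  rw [map_sum, ← compHom_apply, map_sum]
  rw [Finset.sum_eq_single g]
  · rw [compHom_apply,
      DirectSum.decompose_of_mem_same 𝒮 (hgr g _ (DirectSum.decompose ℳ m g).2)]
  · intro h _ hneq
    rw [compHom_apply,
      DirectSum.decompose_of_mem_ne 𝒮 (hgr h _ (DirectSum.decompose ℳ m h).2) hneq]
  · intro hg
    have h0 : DirectSum.decompose ℳ m g = 0 := DFinsupp.notMem_support_iff.mp hg
    rw [compHom_apply, h0]
    simp

end Aux2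


section Theorems

variable {G : Type*} [AddGroup G] [DecidableEq G]
variable {A : Type*} [Ring A] {M : Type*} [AddCommGroup M] [Module A M]
variable (𝒜 : G → AddSubgroup A) (ℳ : G → AddSubgroup M)
variable [SetLike.GradedMonoid 𝒜] [SetLike.GradedSMul 𝒜 ℳ]
variable [DirectSum.Decomposition 𝒜] [DirectSum.Decomposition ℳ]

theorem stmt4 {S : Type*} [AddCommGroup S] [Module A S] (𝒮 : G → AddSubgroup S)
    [SetLike.GradedSMul 𝒜 𝒮] [DirectSum.Decomposition 𝒮]
    (f : M →ₗ[A] S) (hf : Function.Injective f)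
    (hgr : ∀ g : G, ∀ m ∈ ℳ g, f m ∈ 𝒮 g)
    (K : Submodule A S) (hK : IsGCWP 𝒜 𝒮 K) (hproper : K.comap f ≠ ⊤) :
    IsGCWP 𝒜 ℳ (K.comap f) := by
  classical
  obtain ⟨-, hKgr, hKprime⟩ := hK
  refine ⟨hproper, ?_, ?_⟩
  · -- IsGrSub ℳ (K.comap f)
    intro m hm
    have hm' : f m ∈ K := hm
    rw [← DirectSum.sum_support_decompose ℳ m]
    refine Submodule.sum_mem _ fun g _ => Submodule.subset_span ?_
    refine ⟨?_, g, (DirectSum.decompose ℳ m g).2⟩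
    show (DirectSum.decompose ℳ m g : M) ∈ K.comap f
    have : f (DirectSum.decompose ℳ m g : M) ∈ K := by
      rw [← map_decompose ℳ 𝒮 f hgr]
      exact compInK 𝒜 𝒮 K hKgr hm' g
    exact this
  · intro x y hx hy L hL ⟨a, l, hl, hne⟩ hsub
    have hLmap : IsGrSub 𝒮 (L.map f) := by
      rintro _ ⟨m, hm, rfl⟩
      have h1 : f m ∈ Submodule.map f
          (Submodule.span A ((L : Set M) ∩ {m | SetLike.IsHomogeneousElem ℳ m})) :=
        Submodule.mem_map_of_mem (hL hm)
      rw [Submodule.map_span] at h1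
      refine Submodule.span_mono ?_ h1
      rintro _ ⟨m', ⟨hm'L, g, hg⟩, rfl⟩
      exact ⟨Submodule.mem_map_of_mem hm'L, g, hgr g m' hg⟩
    have hex : ∃ a : A, ∃ s ∈ L.map f, (x * a * y) • s ≠ 0 := by
      refine ⟨a, f l, Submodule.mem_map_of_mem hl, fun h0 => hne (hf ?_)⟩
      rw [map_smul, h0, map_zero]
    have hsub' : ∀ a : A, ∀ s ∈ L.map f, (x * a * y) • s ∈ K := by
      rintro a' _ ⟨l', hl', rfl⟩
      rw [← map_smul]
      exact hsub a' l' hl'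
    rcases hKprime x y hx hy (L.map f) hLmap hex hsub' with h | h
    · left
      intro l' hl'
      show f (x • l') ∈ K
      rw [map_smul]
      exact h (f l') (Submodule.mem_map_of_mem hl')
    · right
      intro l' hl'
      show f (y • l') ∈ K
      rw [map_smul]
      exact h (f l') (Submodule.mem_map_of_mem hl')


end Theorems
end

section
/- Let M and S be G-graded A-modules and f : M → S a surjective graded A-homomorphism. If K is a graded classical weakly prime A-submodule of M with Ker(f) ⊆ K, then f(K) is a graded classical weakly prime A-submodule of S. -/
section Theorems

variable {G : Type*} [AddGroup G] [DecidableEq G]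
variable {A : Type*} [Ring A] {M : Type*} [AddCommGroup M] [Module A M]
variable (𝒜 : G → AddSubgroup A) (ℳ : G → AddSubgroup M)
variable [SetLike.GradedMonoid 𝒜] [SetLike.GradedSMul 𝒜 ℳ]
variable [DirectSum.Decomposition 𝒜] [DirectSum.Decomposition ℳ]

set_option linter.unusedSectionVars false in
lemma aux_single {L : Submodule A M} {n : M} {i : G} (hni : n ∈ ℳ i) (hnL : n ∈ L) (g : G) :
    (DirectSum.decompose ℳ n g : M) ∈ L := by
  by_cases h : i = g
  · subst h; rwa [DirectSum.decompose_of_mem_same ℳ hni]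
  · rw [DirectSum.decompose_of_mem_ne ℳ hni h]; exact L.zero_mem

set_option linter.unusedSectionVars false in
include 𝒜 in
lemma aux_comp_mem {L : Submodule A M} (hL : IsGrSub ℳ L) {m : M} (hm : m ∈ L) (g : G) :
    (DirectSum.decompose ℳ m g : M) ∈ L := by
  classical
  have hT : ∀ n ∈ Submodule.span A ((L : Set M) ∩ {m | SetLike.IsHomogeneousElem ℳ m}),
      ∀ g, (DirectSum.decompose ℳ n g : M) ∈ L := by
    intro n hn
    refine Submodule.span_induction ?_ ?_ ?_ ?_ hn
    · rintro x ⟨hxL, i, hxi⟩ g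
      exact aux_single ℳ hxi hxL g
    · intro g; simp
    · intro x y _ _ hx hy g
      rw [DirectSum.decompose_add]
      exact L.add_mem (hx g) (hy g)
    · intro a n _ hn g
      have key : a • n = ∑ i ∈ (DirectSum.decompose 𝒜 a).support,
          ∑ j ∈ (DirectSum.decompose ℳ n).support,
          ((DirectSum.decompose 𝒜 a i : A) • (DirectSum.decompose ℳ n j : M)) := by
        conv_lhs => rw [← DirectSum.sum_support_decompose 𝒜 a,
          ← DirectSum.sum_support_decompose ℳ n]
        rw [Finset.sum_smul]
        exact Finset.sum_congr rfl fun i _ => Finset.smul_sum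
      rw [key, DirectSum.decompose_sum]
      rw [DFinsupp.finset_sum_apply]
      rw [AddSubmonoidClass.coe_finset_sum]
      refine Submodule.sum_mem L fun i _ => ?_
      rw [DirectSum.decompose_sum, DFinsupp.finset_sum_apply, AddSubmonoidClass.coe_finset_sum]
      refine Submodule.sum_mem L fun j _ => ?_
      exact aux_single ℳ (SetLike.GradedSMul.smul_mem (DirectSum.decompose 𝒜 a i).2
        (DirectSum.decompose ℳ n j).2) (L.smul_mem _ (hn j)) g
  exact hT m (hL hm) g

set_option linter.unusedSectionVars false in
lemma aux_map_decompose {S : Type*} [AddCommGroup S] [Module A S] (𝒮 : G → AddSubgroup S)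
    [DirectSum.Decomposition 𝒮] (f : M →ₗ[A] S)
    (hgr : ∀ g : G, ∀ m ∈ ℳ g, f m ∈ 𝒮 g) (m : M) (g : G) :
    (DirectSum.decompose 𝒮 (f m) g : S) = f (DirectSum.decompose ℳ m g : M) := by
  classical
  conv_lhs => rw [← DirectSum.sum_support_decompose ℳ m]
  rw [map_sum, DirectSum.decompose_sum, DFinsupp.finset_sum_apply,
    AddSubmonoidClass.coe_finset_sum]
  have hterm : ∀ j, (DirectSum.decompose 𝒮 (f (DirectSum.decompose ℳ m j : M)) g : S)
      = if j = g then f (DirectSum.decompose ℳ m j : M) else 0 := by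
    intro j
    split_ifs with h
    · subst h; exact DirectSum.decompose_of_mem_same 𝒮 (hgr j _ (DirectSum.decompose ℳ m j).2)
    · exact DirectSum.decompose_of_mem_ne 𝒮 (hgr j _ (DirectSum.decompose ℳ m j).2) h
  rw [Finset.sum_congr rfl fun j _ => hterm j, Finset.sum_ite_eq' _ g]
  split_ifs with h
  · rfl
  · rw [DFinsupp.notMem_support_iff] at h
    rw [h]
    simp

theorem stmt5 {S : Type*} [AddCommGroup S] [Module A S] (𝒮 : G → AddSubgroup S)
    [SetLike.GradedSMul 𝒜 𝒮] [DirectSum.Decomposition 𝒮]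
    (f : M →ₗ[A] S) (hf : Function.Surjective f)
    (hgr : ∀ g : G, ∀ m ∈ ℳ g, f m ∈ 𝒮 g)
    (K : Submodule A M) (hK : IsGCWP 𝒜 ℳ K)
    (hker : LinearMap.ker f ≤ K) :
    IsGCWP 𝒜 𝒮 (K.map f) := by
  classical
  obtain ⟨hKtop, hKgr, hKprime⟩ := hK
  -- a key fact: preimage of map is K
  have hpre : ∀ m : M, f m ∈ K.map f → m ∈ K := by
    intro m hm
    obtain ⟨k, hk, hfk⟩ := hm
    have : m - k ∈ LinearMap.ker f := by
      simp [LinearMap.mem_ker, map_sub, hfk]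
    have := hker this
    have : (m - k) + k ∈ K := K.add_mem this hk
    simpa using this
  refine ⟨?_, ?_, ?_⟩
  · -- properness
    intro htop
    apply hKtop
    rw [Submodule.eq_top_iff']
    intro m
    exact hpre m (htop ▸ Submodule.mem_top)
  · -- gradedness of K.map f
    rintro s ⟨k, hk, rfl⟩
    have := hKgr hk
    have h2 : f k ∈ (Submodule.span A ((K : Set M) ∩ {m | SetLike.IsHomogeneousElem ℳ m})).map f :=
      Submodule.mem_map_of_mem this
    rw [Submodule.map_span] at h2
    refine Submodule.span_mono ?_ h2
    rintro _ ⟨m, ⟨hmK, i, hmi⟩, rfl⟩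
    exact ⟨⟨m, hmK, rfl⟩, i, hgr i m hmi⟩
  · -- main condition
    intro x y hx hy L hL hne hcon
    set L' : Submodule A M := L.comap f with hL'def
    have hL'gr : IsGrSub ℳ L' := by
      intro m hm
      have hsum : (∑ j ∈ (DirectSum.decompose ℳ m).support, (DirectSum.decompose ℳ m j : M)) ∈
          Submodule.span A ((L' : Set M) ∩ {m | SetLike.IsHomogeneousElem ℳ m}) := by
        refine Submodule.sum_mem _ fun j _ => Submodule.subset_span ?_
        refine ⟨?_, j, (DirectSum.decompose ℳ m j).2⟩
        show f (DirectSum.decompose ℳ m j : M) ∈ L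
        rw [← aux_map_decompose ℳ 𝒮 f hgr m j]
        exact aux_comp_mem 𝒜 𝒮 hL hm j
      rwa [DirectSum.sum_support_decompose] at hsum
    have hne' : ∃ a : A, ∃ l ∈ L', (x * a * y) • l ≠ 0 := by
      obtain ⟨a, l, hlL, hne0⟩ := hne
      obtain ⟨m, rfl⟩ := hf l
      refine ⟨a, m, hlL, fun h0 => hne0 ?_⟩
      have := congrArg f h0
      simpa [map_smul] using this
    have hcon' : ∀ a : A, ∀ l ∈ L', (x * a * y) • l ∈ K := by
      intro a m hm
      apply hpre
      rw [map_smul]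
      exact hcon a (f m) hm
    rcases hKprime x y hx hy L' hL'gr hne' hcon' with h | h
    · left
      intro l hl
      obtain ⟨m, rfl⟩ := hf l
      rw [← map_smul]
      exact Submodule.mem_map_of_mem (h m hl)
    · right
      intro l hl
      obtain ⟨m, rfl⟩ := hf l
      rw [← map_smul]
      exact Submodule.mem_map_of_mem (h m hl)

end Theorems
end

section
/- Let M be a graded A-module and T ⊊ K proper graded A-submodules of M. If K is a graded classical weakly prime A-submodule of M, then K/T is a graded classical weakly prime A-submodule of M/T. -/
section Theorems

variable {G : Type*} [AddGroup G] [DecidableEq G]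
variable {A : Type*} [Ring A] {M : Type*} [AddCommGroup M] [Module A M]
variable (𝒜 : G → AddSubgroup A) (ℳ : G → AddSubgroup M)
variable [SetLike.GradedMonoid 𝒜] [SetLike.GradedSMul 𝒜 ℳ]
variable [DirectSum.Decomposition 𝒜] [DirectSum.Decomposition ℳ]

theorem stmt6 (T K : Submodule A M) (hT : T ≠ ⊤) (hTgr : IsGrSub ℳ T)
    (hTK : T < K) (hK : IsGCWP 𝒜 ℳ K) :
    IsGCWP 𝒜 (fun g => (ℳ g).map T.mkQ.toAddMonoidHom) (K.map T.mkQ) := by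
  obtain ⟨hKne, hKgr, hKp⟩ := hK
  have hTleK : T ≤ K := le_of_lt hTK
  have hker : LinearMap.ker T.mkQ = T := Submodule.ker_mkQ T
  refine ⟨?_, ?_, ?_⟩
  · intro h
    apply hKne
    have h2 : Submodule.comap T.mkQ (K.map T.mkQ) = ⊤ := by
      rw [h]; exact Submodule.comap_top _
    rwa [Submodule.comap_map_eq, hker, sup_eq_left.mpr hTleK] at h2
  · rintro k' ⟨k, hkK, rfl⟩
    have h1 : T.mkQ k ∈
        (Submodule.span A ((K : Set M) ∩ {m | SetLike.IsHomogeneousElem ℳ m})).map T.mkQ :=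
      Submodule.mem_map_of_mem (hKgr hkK)
    rw [Submodule.map_span] at h1
    refine Submodule.span_mono ?_ h1
    rintro _ ⟨m, ⟨hmK, g, hmg⟩, rfl⟩
    exact ⟨Submodule.mem_map_of_mem hmK, g, ⟨m, hmg, rfl⟩⟩
  · intro x y hx hy L' hL'gr hne hsub
    set L : Submodule A M := L'.comap T.mkQ with hLdef
    have hTleL : T ≤ L := by
      intro t ht
      show T.mkQ t ∈ L'
      rw [show T.mkQ t = 0 from (Submodule.Quotient.mk_eq_zero T).mpr ht]
      exact L'.zero_mem
    have hLgr : IsGrSub ℳ L := by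
      set S : Set M := (L : Set M) ∩ {m | SetLike.IsHomogeneousElem ℳ m} with hS
      have hTspan : T ≤ Submodule.span A S :=
        le_trans hTgr (Submodule.span_mono (Set.inter_subset_inter_left _ hTleL))
      have hgen : Submodule.span A ((L' : Set (M ⧸ T)) ∩
          {m | SetLike.IsHomogeneousElem (fun g => (ℳ g).map T.mkQ.toAddMonoidHom) m}) ≤
          (Submodule.span A S).map T.mkQ := by
        rw [Submodule.map_span]
        apply Submodule.span_mono
        rintro l' ⟨hl'L, g, hl'g⟩
        obtain ⟨m, hmg, rfl⟩ := hl'g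
        exact ⟨m, ⟨hl'L, g, hmg⟩, rfl⟩
      intro u hu
      obtain ⟨v, hv, heq⟩ := hgen (hL'gr hu)
      have hmem : u - v ∈ T := by
        have : v - u ∈ T := by
          rw [← Submodule.Quotient.eq T]
          exact heq
        simpa using T.neg_mem this
      have : u = v + (u - v) := by abel
      rw [this]
      exact Submodule.add_mem _ hv (hTspan hmem)
    have hLne : ∃ a : A, ∃ l ∈ L, (x * a * y) • l ≠ 0 := by
      obtain ⟨a, l', hl', hne0⟩ := hne
      obtain ⟨l, rfl⟩ := T.mkQ_surjective l'
      refine ⟨a, l, hl', fun h0 => hne0 ?_⟩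
      rw [← T.mkQ.map_smul, h0, map_zero]
    have hLsub : ∀ a : A, ∀ l ∈ L, (x * a * y) • l ∈ K := by
      intro a l hl
      obtain ⟨k, hk, heq⟩ := hsub a (T.mkQ l) hl
      have hdiff : k - (x * a * y) • l ∈ T := by
        rw [← Submodule.Quotient.eq T]
        rw [← T.mkQ.map_smul] at heq
        exact heq
      have : (x * a * y) • l = k - (k - (x * a * y) • l) := by abel
      rw [this]
      exact Submodule.sub_mem _ hk (hTleK hdiff)
    rcases hKp x y hx hy L hLgr hLne hLsub with h | h
    · left
      intro l' hl'
      obtain ⟨l, rfl⟩ := T.mkQ_surjective l'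
      rw [← T.mkQ.map_smul]
      exact Submodule.mem_map_of_mem (h l hl')
    · right
      intro l' hl'
      obtain ⟨l, rfl⟩ := T.mkQ_surjective l'
      rw [← T.mkQ.map_smul]
      exact Submodule.mem_map_of_mem (h l hl')

end Theorems
end

section
/- Let M be a graded A-module and T ⊊ K proper graded A-submodules of M. If T is a graded classical weakly prime A-submodule of M and K/T is a graded classical weakly prime A-submodule of M/T, then K is a graded classical weakly prime A-submodule of M. -/
section Theorems

variable {G : Type*} [AddGroup G] [DecidableEq G]
variable {A : Type*} [Ring A] {M : Type*} [AddCommGroup M] [Module A M]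
variable (𝒜 : G → AddSubgroup A) (ℳ : G → AddSubgroup M)
variable [SetLike.GradedMonoid 𝒜] [SetLike.GradedSMul 𝒜 ℳ]
variable [DirectSum.Decomposition 𝒜] [DirectSum.Decomposition ℳ]

theorem stmt7 (T K : Submodule A M) (hTK : T < K) (hKtop : K ≠ ⊤)
    (hKgr : IsGrSub ℳ K) (hT : IsGCWP 𝒜 ℳ T)
    (hquot : IsGCWP 𝒜 (fun g => (ℳ g).map T.mkQ.toAddMonoidHom) (K.map T.mkQ)) :
    IsGCWP 𝒜 ℳ K := by
  obtain ⟨_, _, hTprime⟩ := hT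
  obtain ⟨_, _, hQprime⟩ := hquot
  refine ⟨hKtop, hKgr, ?_⟩
  intro x y hx hy L hL hne hmem
  by_cases hall : ∀ a : A, ∀ l ∈ L, (x * a * y) • l ∈ T
  · rcases hTprime x y hx hy L hL hne hall with h | h
    · exact Or.inl fun l hl => hTK.le (h l hl)
    · exact Or.inr fun l hl => hTK.le (h l hl)
  · push_neg at hall
    obtain ⟨a, l, hlL, hlnT⟩ := hall
    have hLq : IsGrSub (fun g => (ℳ g).map T.mkQ.toAddMonoidHom) (L.map T.mkQ) := by
      rintro u ⟨v, hv, rfl⟩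
      have h2 : T.mkQ v ∈
          Submodule.map T.mkQ (Submodule.span A ((L : Set M) ∩ {m | SetLike.IsHomogeneousElem ℳ m})) :=
        ⟨v, hL hv, rfl⟩
      rw [Submodule.map_span] at h2
      refine Submodule.span_mono ?_ h2
      rintro _ ⟨w, ⟨hwL, g, hwg⟩, rfl⟩
      exact ⟨⟨w, hwL, rfl⟩, g, ⟨w, hwg, rfl⟩⟩
    have hmemK : ∀ v : M, T.mkQ v ∈ K.map T.mkQ → v ∈ K := by
      rintro v ⟨k, hk, hkv⟩
      rw [Submodule.mkQ_apply, Submodule.mkQ_apply, Submodule.Quotient.eq] at hkv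
      have hsub : k - v ∈ K := hTK.le hkv
      have := K.sub_mem hk hsub
      simpa using this
    have hne' : ∃ b : A, ∃ l' ∈ L.map T.mkQ, (x * b * y) • l' ≠ 0 := by
      refine ⟨a, T.mkQ l, ⟨l, hlL, rfl⟩, ?_⟩
      rw [← map_smul, Submodule.mkQ_apply, Ne, Submodule.Quotient.mk_eq_zero]
      exact hlnT
    have hmem' : ∀ b : A, ∀ l' ∈ L.map T.mkQ, (x * b * y) • l' ∈ K.map T.mkQ := by
      rintro b _ ⟨w, hw, rfl⟩
      rw [← map_smul]
      exact ⟨_, hmem b w hw, rfl⟩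
    rcases hQprime x y hx hy (L.map T.mkQ) hLq hne' hmem' with h | h
    · refine Or.inl fun l hl => hmemK _ ?_
      have := h (T.mkQ l) ⟨l, hl, rfl⟩
      rwa [← map_smul] at this
    · refine Or.inr fun l hl => hmemK _ ?_
      have := h (T.mkQ l) ⟨l, hl, rfl⟩
      rwa [← map_smul] at this

end Theorems
end

section
/- Let M be a graded A-module and K a proper graded A-submodule of M. If K is a graded weakly 2-absorbing A-submodule of M and (K :_A M) is a graded weakly prime ideal of A, then K is a graded classical weakly prime A-submodule of M. -/
section Theorems

variable {G : Type*} [AddGroup G] [DecidableEq G]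
variable {A : Type*} [Ring A] {M : Type*} [AddCommGroup M] [Module A M]
variable (𝒜 : G → AddSubgroup A) (ℳ : G → AddSubgroup M)
variable [SetLike.GradedMonoid 𝒜] [SetLike.GradedSMul 𝒜 ℳ]
variable [DirectSum.Decomposition 𝒜] [DirectSum.Decomposition ℳ]

theorem stmt8 (K : Submodule A M) (hK : IsGW2A 𝒜 ℳ K)
    (hcolon : ∀ x y : A, SetLike.IsHomogeneousElem 𝒜 x → SetLike.IsHomogeneousElem 𝒜 y →
      (∃ a : A, x * a * y ≠ 0) → (∀ a : A, ∀ m : M, (x * a * y) • m ∈ K) →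
      (∀ m : M, x • m ∈ K) ∨ (∀ m : M, y • m ∈ K)) :
    IsGCWP 𝒜 ℳ K := by
  obtain ⟨hKtop, hKgr, h2a⟩ := hK
  refine ⟨hKtop, hKgr, fun x y hx hy L hL hne hsub => ?_⟩
  rcases h2a x y hx hy L hL hne hsub with h | h | h
  · exact Or.inl h
  · exact Or.inr h
  · obtain ⟨a, l, hl, hne'⟩ := hne
    have hxa : x * a * y ≠ 0 := fun h0 => hne' (by rw [h0, zero_smul])
    rcases hcolon x y hx hy ⟨a, hxa⟩ h with h' | h'
    · exact Or.inl fun l _ => h' l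
    · exact Or.inr fun l _ => h' l


end Theorems
end

section
/- Let M be a graded A-module and K a graded classical weakly prime A-submodule of M. If (x, y, L) is a graded classical triple zero of K, then xAyK = 0. -/
section Theorems

variable {G : Type*} [AddGroup G] [DecidableEq G]
variable {A : Type*} [Ring A] {M : Type*} [AddCommGroup M] [Module A M]
variable (𝒜 : G → AddSubgroup A) (ℳ : G → AddSubgroup M)
variable [SetLike.GradedMonoid 𝒜] [SetLike.GradedSMul 𝒜 ℳ]
variable [DirectSum.Decomposition 𝒜] [DirectSum.Decomposition ℳ]

theorem stmt11 (K : Submodule A M) (hK : IsGCWP 𝒜 ℳ K)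
    (x y : A) (hx : SetLike.IsHomogeneousElem 𝒜 x) (hy : SetLike.IsHomogeneousElem 𝒜 y)
    (L : Submodule A M) (hL : IsGrSub ℳ L) (htz : TripleZero K x y L) :
    ∀ a : A, ∀ k ∈ K, (x * a * y) • k = 0 := by
  intro a k hk
  by_contra hne
  set S : Submodule A M :=
    Submodule.span A ((K : Set M) ∩ {m | SetLike.IsHomogeneousElem ℳ m}) with hSdef
  have hSK : S ≤ K := Submodule.span_le.mpr (fun m hm => hm.1)
  set L' : Submodule A M := L ⊔ S with hL'def
  have hLL' : L ≤ L' := le_sup_left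
  have hSL' : S ≤ L' := le_sup_right
  have hkL' : k ∈ L' := hSL' (hK.2.1 hk)
  have hGr : IsGrSub ℳ L' := by
    intro m hm
    rcases Submodule.mem_sup.mp hm with ⟨u, hu, v, hv, rfl⟩
    refine Submodule.add_mem _ ?_ ?_
    · refine Submodule.span_mono ?_ (hL hu)
      intro z hz
      exact ⟨hLL' hz.1, hz.2⟩
    · refine Submodule.span_mono ?_ hv
      intro z hz
      exact ⟨hSL' (Submodule.subset_span hz), hz.2⟩
  have hcont : ∀ b : A, ∀ l ∈ L', (x * b * y) • l ∈ K := by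
    intro b l hl
    rcases Submodule.mem_sup.mp hl with ⟨u, hu, v, hv, rfl⟩
    rw [smul_add, htz.1 b u hu, zero_add]
    exact K.smul_mem _ (hSK hv)
  have hex : ∃ b : A, ∃ l ∈ L', (x * b * y) • l ≠ 0 := ⟨a, k, hkL', hne⟩
  rcases hK.2.2 x y hx hy L' hGr hex hcont with h | h
  · exact htz.2.1 (fun l hl => h l (hLL' hl))
  · exact htz.2.2 (fun l hl => h l (hLL' hl))

end Theorems
end

section
/- Let M be a graded A-module, K a graded classical weakly prime A-submodule of M, and (x, y, L) a graded classical triple zero of K with y ∈ A_g for some g ∈ G. Then x(K :_{A_g} M)L = 0, where (K :_{A_g} M) = {a ∈ A_g : aM ⊆ K}. -/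
section Theorems

variable {G : Type*} [AddGroup G] [DecidableEq G]
variable {A : Type*} [Ring A] {M : Type*} [AddCommGroup M] [Module A M]
variable (𝒜 : G → AddSubgroup A) (ℳ : G → AddSubgroup M)
variable [SetLike.GradedMonoid 𝒜] [SetLike.GradedSMul 𝒜 ℳ]
variable [DirectSum.Decomposition 𝒜] [DirectSum.Decomposition ℳ]

theorem stmt12 (K : Submodule A M) (hK : IsGCWP 𝒜 ℳ K)
    (x y : A) (hx : SetLike.IsHomogeneousElem 𝒜 x) (g : G) (hy : y ∈ 𝒜 g)
    (L : Submodule A M) (hL : IsGrSub ℳ L) (htz : TripleZero K x y L) :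
    ∀ r ∈ 𝒜 g, (∀ m : M, r • m ∈ K) → ∀ l ∈ L, (x * r) • l = 0 := by
  intro r hr hrK l₀ hl₀
  by_contra hne
  obtain ⟨hzero, hxL, hyL⟩ := htz
  have hyr : SetLike.IsHomogeneousElem 𝒜 (y + r) := ⟨g, (𝒜 g).add_mem hy hr⟩
  have key : ∀ a : A, ∀ l ∈ L, (x * a * (y + r)) • l = (x * a * r) • l := by
    intro a l hl
    rw [mul_add, add_smul, hzero a l hl, zero_add]
  have hnz : ∃ a : A, ∃ l ∈ L, (x * a * (y + r)) • l ≠ 0 := by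
    refine ⟨1, l₀, hl₀, ?_⟩
    rw [key 1 l₀ hl₀, mul_one]
    exact hne
  have hmem : ∀ a : A, ∀ l ∈ L, (x * a * (y + r)) • l ∈ K := by
    intro a l hl
    rw [key a l hl, mul_smul]
    exact K.smul_mem _ (hrK l)
  rcases hK.2.2 x (y + r) hx hyr L hL hnz hmem with h | h
  · exact hxL h
  · apply hyL
    intro l hl
    have h1 := h l hl
    have h2 : r • l ∈ K := hrK l
    have := K.sub_mem h1 h2
    rwa [add_smul, add_sub_cancel_right] at this

end Theorems
end

section
/- Let M be a graded A-module, K a graded classical weakly prime A-submodule of M, and (x, y, L) a graded classical triple zero of K with x, y ∈ A_g for some g ∈ G. Then (K :_{A_g} M)² L = 0 and (K :_{A_g} M)² K = 0. -/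
section Theorems

variable {G : Type*} [AddGroup G] [DecidableEq G]
variable {A : Type*} [Ring A] {M : Type*} [AddCommGroup M] [Module A M]
variable (𝒜 : G → AddSubgroup A) (ℳ : G → AddSubgroup M)
variable [SetLike.GradedMonoid 𝒜] [SetLike.GradedSMul 𝒜 ℳ]
variable [DirectSum.Decomposition 𝒜] [DirectSum.Decomposition ℳ]

lemma auxA (K : Submodule A M) (hK : IsGCWP 𝒜 ℳ K)
    (x y : A) (g : G) (hx : x ∈ 𝒜 g) (hy : y ∈ 𝒜 g)
    (L' : Submodule A M) (hL' : IsGrSub ℳ L')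
    (h0 : ∀ a : A, ∀ l ∈ L', (x * a * y) • l = 0)
    (hnx : ¬ ∀ l ∈ L', x • l ∈ K) (hny : ¬ ∀ l ∈ L', y • l ∈ K)
    (r : A) (hr : r ∈ 𝒜 g) (hrK : ∀ m : M, r • m ∈ K)
    (s : A) (hs : s ∈ 𝒜 g) (hsK : ∀ m : M, s • m ∈ K) :
    ∀ a : A, ∀ l ∈ L', (r * a * s) • l = 0 := by
  have hprime := hK.2.2
  have step1 : ∀ a : A, ∀ l ∈ L', (x * a * s) • l = 0 := by
    by_contra h
    push_neg at h
    obtain ⟨a, l, hl, hne⟩ := h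
    have key : ∀ b : A, ∀ m ∈ L', (x * b * (y + s)) • m = (x * b * s) • m := by
      intro b m hm
      rw [mul_add, add_smul, h0 b m hm, zero_add]
    have hex : ∃ b : A, ∃ m ∈ L', (x * b * (y + s)) • m ≠ 0 :=
      ⟨a, l, hl, by rw [key a l hl]; exact hne⟩
    have hmem : ∀ b : A, ∀ m ∈ L', (x * b * (y + s)) • m ∈ K := by
      intro b m hm
      rw [key b m hm, mul_smul]
      exact K.smul_mem _ (hsK m)
    rcases hprime x (y + s) ⟨g, hx⟩ ⟨g, add_mem hy hs⟩ L' hL' hex hmem with h1 | h2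
    · exact hnx h1
    · refine hny fun m hm => ?_
      have hyeq : y • m = (y + s) • m - s • m := by rw [add_smul]; abel
      rw [hyeq]
      exact sub_mem (h2 m hm) (hsK m)
  have step2 : ∀ a : A, ∀ l ∈ L', (r * a * y) • l = 0 := by
    by_contra h
    push_neg at h
    obtain ⟨a, l, hl, hne⟩ := h
    have key : ∀ b : A, ∀ m ∈ L', ((x + r) * b * y) • m = (r * b * y) • m := by
      intro b m hm
      rw [add_mul, add_mul, add_smul, h0 b m hm, zero_add]
    have hex : ∃ b : A, ∃ m ∈ L', ((x + r) * b * y) • m ≠ 0 :=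
      ⟨a, l, hl, by rw [key a l hl]; exact hne⟩
    have hmem : ∀ b : A, ∀ m ∈ L', ((x + r) * b * y) • m ∈ K := by
      intro b m hm
      rw [key b m hm, mul_assoc, mul_smul]
      exact hrK _
    rcases hprime (x + r) y ⟨g, add_mem hx hr⟩ ⟨g, hy⟩ L' hL' hex hmem with h1 | h2
    · refine hnx fun m hm => ?_
      have hxeq : x • m = (x + r) • m - r • m := by rw [add_smul]; abel
      rw [hxeq]
      exact sub_mem (h1 m hm) (hrK m)
    · exact hny h2
  by_contra h
  push_neg at h
  obtain ⟨a, l, hl, hne⟩ := h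
  have key : ∀ b : A, ∀ m ∈ L', ((x + r) * b * (y + s)) • m = (r * b * s) • m := by
    intro b m hm
    have hexp : (x + r) * b * (y + s) = x * b * y + x * b * s + r * b * y + r * b * s := by
      noncomm_ring
    rw [hexp, add_smul, add_smul, add_smul, h0 b m hm, step1 b m hm, step2 b m hm]
    simp
  have hex : ∃ b : A, ∃ m ∈ L', ((x + r) * b * (y + s)) • m ≠ 0 :=
    ⟨a, l, hl, by rw [key a l hl]; exact hne⟩
  have hmem : ∀ b : A, ∀ m ∈ L', ((x + r) * b * (y + s)) • m ∈ K := by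
    intro b m hm
    rw [key b m hm, mul_assoc, mul_smul]
    exact hrK _
  rcases hprime (x + r) (y + s) ⟨g, add_mem hx hr⟩ ⟨g, add_mem hy hs⟩ L' hL' hex hmem
    with h1 | h2
  · refine hnx fun m hm => ?_
    have hxeq : x • m = (x + r) • m - r • m := by rw [add_smul]; abel
    rw [hxeq]
    exact sub_mem (h1 m hm) (hrK m)
  · refine hny fun m hm => ?_
    have hyeq : y • m = (y + s) • m - s • m := by rw [add_smul]; abel
    rw [hyeq]
    exact sub_mem (h2 m hm) (hsK m)

theorem stmt13 (K : Submodule A M) (hK : IsGCWP 𝒜 ℳ K)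
    (x y : A) (g : G) (hx : x ∈ 𝒜 g) (hy : y ∈ 𝒜 g)
    (L : Submodule A M) (hL : IsGrSub ℳ L) (htz : TripleZero K x y L) :
    ∀ r ∈ 𝒜 g, (∀ m : M, r • m ∈ K) → ∀ s ∈ 𝒜 g, (∀ m : M, s • m ∈ K) →
      (∀ l ∈ L, (r * s) • l = 0) ∧ (∀ k ∈ K, (r * s) • k = 0) := by
  intro r hr hrK s hs hsK
  obtain ⟨h0, hnx, hny⟩ := htz
  have core : ∀ k : M, SetLike.IsHomogeneousElem ℳ k → k ∈ K →
      ∀ a : A, (r * s) • (a • k) = 0 := by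
    intro k hkh hkK a
    set L' := L ⊔ Submodule.span A {k} with hL'def
    have hLle : L ≤ L' := le_sup_left
    have hkL' : k ∈ L' :=
      (le_sup_right : Submodule.span A {k} ≤ L') (Submodule.mem_span_singleton_self k)
    have hspanK : Submodule.span A {k} ≤ K := by
      rw [Submodule.span_le]
      intro z hz
      rw [Set.mem_singleton_iff] at hz
      subst hz
      exact hkK
    have hL'gr : IsGrSub ℳ L' := by
      refine sup_le ?_ ?_
      · exact hL.trans (Submodule.span_mono (Set.inter_subset_inter_left _ hLle))
      · rw [Submodule.span_le]
        intro z hz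
        rw [Set.mem_singleton_iff] at hz
        subst hz
        exact Submodule.subset_span ⟨hkL', hkh⟩
    have h0' : ∀ b : A, ∀ m ∈ L', (x * b * y) • m = 0 := by
      by_contra h
      push_neg at h
      obtain ⟨b, m, hm, hne⟩ := h
      have hmem : ∀ c : A, ∀ m ∈ L', (x * c * y) • m ∈ K := by
        intro c m hm
        obtain ⟨p, hp, q, hq, rfl⟩ := Submodule.mem_sup.mp hm
        rw [smul_add, h0 c p hp, zero_add]
        exact K.smul_mem _ (hspanK hq)
      rcases hK.2.2 x y ⟨g, hx⟩ ⟨g, hy⟩ L' hL'gr ⟨b, m, hm, hne⟩ hmem with h1 | h2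
      · exact hnx fun l hl => h1 l (hLle hl)
      · exact hny fun l hl => h2 l (hLle hl)
    have hnx' : ¬ ∀ m ∈ L', x • m ∈ K := fun h => hnx fun l hl => h l (hLle hl)
    have hny' : ¬ ∀ m ∈ L', y • m ∈ K := fun h => hny fun l hl => h l (hLle hl)
    have hres := auxA 𝒜 ℳ K hK x y g hx hy L' hL'gr h0' hnx' hny' r hr hrK s hs hsK
      1 (a • k) (L'.smul_mem a hkL')
    simpa [mul_one] using hres
  refine ⟨?_, ?_⟩
  · intro l hl
    have hres := auxA 𝒜 ℳ K hK x y g hx hy L hL h0 hnx hny r hr hrK s hs hsK 1 l hl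
    simpa [mul_one] using hres
  · set T : Submodule A M :=
      { carrier := {m | ∀ a : A, (r * s) • (a • m) = 0}
        add_mem' := by
          intro m n hm hn a
          rw [smul_add, smul_add, hm a, hn a, add_zero]
        zero_mem' := by
          intro a
          rw [smul_zero, smul_zero]
        smul_mem' := by
          intro c m hm a
          rw [smul_smul a c m]
          exact hm (a * c) } with hTdef
    have hKT : K ≤ T := by
      refine hK.2.1.trans ?_
      rw [Submodule.span_le]
      rintro z ⟨hzK, hzh⟩
      exact core z hzh hzK
    intro k hk
    have := hKT hk (1 : A)
    simpa [one_smul] using this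

end Theorems
end

section
/- Let M be a graded A-module and K a graded classical weakly prime A-submodule of M. If there exists a graded classical triple zero (x, y, L) of K with x, y ∈ A_e, then (K :_{A_e} M)³ ⊆ Ann_{A_e}(M). In particular, if M is faithful, then (K :_{A_e} M)³ = 0. -/
section Theorems

variable {G : Type*} [AddGroup G] [DecidableEq G]
variable {A : Type*} [Ring A] {M : Type*} [AddCommGroup M] [Module A M]
variable (𝒜 : G → AddSubgroup A) (ℳ : G → AddSubgroup M)
variable [SetLike.GradedMonoid 𝒜] [SetLike.GradedSMul 𝒜 ℳ]
variable [DirectSum.Decomposition 𝒜] [DirectSum.Decomposition ℳ]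

theorem stmt14 (K : Submodule A M) (hK : IsGCWP 𝒜 ℳ K)
    (x y : A) (hx : x ∈ 𝒜 0) (hy : y ∈ 𝒜 0)
    (L : Submodule A M) (hL : IsGrSub ℳ L) (htz : TripleZero K x y L) :
    (∀ r ∈ 𝒜 0, (∀ m : M, r • m ∈ K) → ∀ s ∈ 𝒜 0, (∀ m : M, s • m ∈ K) →
      ∀ t ∈ 𝒜 0, (∀ m : M, t • m ∈ K) → ∀ m : M, (r * s * t) • m = 0) ∧
    ((∀ a : A, (∀ m : M, a • m = 0) → a = 0) →
      ∀ r ∈ 𝒜 0, (∀ m : M, r • m ∈ K) → ∀ s ∈ 𝒜 0, (∀ m : M, s • m ∈ K) →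
        ∀ t ∈ 𝒜 0, (∀ m : M, t • m ∈ K) → r * s * t = 0) := by
  classical
  obtain ⟨hKtop, hKgr, hKmain⟩ := hK
  obtain ⟨htz0, htzx, htzy⟩ := htz
  have main : ∀ r ∈ 𝒜 0, (∀ m : M, r • m ∈ K) → ∀ s ∈ 𝒜 0, (∀ m : M, s • m ∈ K) →
      ∀ t ∈ 𝒜 0, (∀ m : M, t • m ∈ K) → ∀ m : M, (r * s * t) • m = 0 := by
    intro r hr hrK s hs hsK t ht htK m
    have key : ∀ g : G, ∀ m' ∈ ℳ g, (r * s * t) • m' = 0 := by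
      intro g m' hm'
      set N : Submodule A M := L ⊔ Submodule.span A {t • m'} with hNdef
      have htmN : t • m' ∈ N := Submodule.mem_sup_right (Submodule.mem_span_singleton_self _)
      have hLN : L ≤ N := le_sup_left
      have hNmem : ∀ n ∈ N, ∃ l ∈ L, ∃ c : A, l + c • (t • m') = n := by
        intro n hn
        rw [hNdef, Submodule.mem_sup] at hn
        obtain ⟨l, hl, z, hz, hlz⟩ := hn
        rw [Submodule.mem_span_singleton] at hz
        obtain ⟨c, rfl⟩ := hz
        exact ⟨l, hl, c, hlz⟩
      have hNgr : IsGrSub ℳ N := by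
        have hL' : L ≤ Submodule.span A ((L : Set M) ∩ {m | SetLike.IsHomogeneousElem ℳ m}) := hL
        have h1 : (L : Set M) ∩ {m | SetLike.IsHomogeneousElem ℳ m} ⊆
            (N : Set M) ∩ {m | SetLike.IsHomogeneousElem ℳ m} := fun z hz => ⟨hLN hz.1, hz.2⟩
        show N ≤ _
        rw [hNdef]
        refine sup_le (hL'.trans (Submodule.span_mono h1)) ?_
        rw [Submodule.span_le]
        rintro z hz
        rw [Set.mem_singleton_iff] at hz; subst hz
        exact Submodule.subset_span ⟨htmN, _, SetLike.GradedSMul.smul_mem ht hm'⟩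
      -- Claim 0 : x A y N = 0
      have claim0 : ∀ a : A, ∀ n ∈ N, (x * a * y) • n = 0 := by
        by_contra hcon
        push_neg at hcon
        obtain ⟨a, n, hn, hne⟩ := hcon
        have hsub : ∀ b : A, ∀ p ∈ N, (x * b * y) • p ∈ K := by
          intro b p hp
          obtain ⟨l, hl, c, rfl⟩ := hNmem p hp
          rw [smul_add, htz0 b l hl, zero_add, ← mul_smul]
          exact K.smul_mem _ (htK m')
        rcases hKmain x y ⟨0, hx⟩ ⟨0, hy⟩ N hNgr ⟨a, n, hn, hne⟩ hsub with h | h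
        · exact htzx fun l hl => h l (hLN hl)
        · exact htzy fun l hl => h l (hLN hl)
      -- Claim 1 : x A w N = 0 whenever w ∈ 𝒜 0 and w M ⊆ K
      have claim1 : ∀ w ∈ 𝒜 0, (∀ m'' : M, w • m'' ∈ K) →
          ∀ a : A, ∀ n ∈ N, (x * a * w) • n = 0 := by
        intro w hw hwK
        by_contra hcon
        push_neg at hcon
        obtain ⟨a, n, hn, hne⟩ := hcon
        have hexp : ∀ b : A, ∀ p ∈ N, (x * b * (y + w)) • p = (x * b * w) • p := by
          intro b p hp
          have h1 : x * b * (y + w) = x * b * y + x * b * w := by noncomm_ring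
          rw [h1, add_smul, claim0 b p hp, zero_add]
        have hsub : ∀ b : A, ∀ p ∈ N, (x * b * (y + w)) • p ∈ K := by
          intro b p hp
          rw [hexp b p hp, mul_smul]
          exact K.smul_mem _ (hwK p)
        have hex : ∃ b : A, ∃ p ∈ N, (x * b * (y + w)) • p ≠ 0 :=
          ⟨a, n, hn, by rw [hexp a n hn]; exact hne⟩
        rcases hKmain x (y + w) ⟨0, hx⟩ ⟨0, (𝒜 0).add_mem hy hw⟩ N hNgr hex hsub with h | h
        · exact htzx fun l hl => h l (hLN hl)
        · refine htzy fun l hl => ?_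
          have h1 := h l (hLN hl)
          have h2 : y • l = (y + w) • l - w • l := by rw [add_smul]; abel
          rw [h2]; exact K.sub_mem h1 (hwK l)
      -- Claim 2 : w A y N = 0 whenever w ∈ 𝒜 0 and w M ⊆ K
      have claim2 : ∀ w ∈ 𝒜 0, (∀ m'' : M, w • m'' ∈ K) →
          ∀ a : A, ∀ n ∈ N, (w * a * y) • n = 0 := by
        intro w hw hwK
        by_contra hcon
        push_neg at hcon
        obtain ⟨a, n, hn, hne⟩ := hcon
        have hexp : ∀ b : A, ∀ p ∈ N, ((x + w) * b * y) • p = (w * b * y) • p := by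
          intro b p hp
          have h1 : (x + w) * b * y = x * b * y + w * b * y := by noncomm_ring
          rw [h1, add_smul, claim0 b p hp, zero_add]
        have hsub : ∀ b : A, ∀ p ∈ N, ((x + w) * b * y) • p ∈ K := by
          intro b p hp
          rw [hexp b p hp, mul_smul, mul_smul]
          exact hwK _
        have hex : ∃ b : A, ∃ p ∈ N, ((x + w) * b * y) • p ≠ 0 :=
          ⟨a, n, hn, by rw [hexp a n hn]; exact hne⟩
        rcases hKmain (x + w) y ⟨0, (𝒜 0).add_mem hx hw⟩ ⟨0, hy⟩ N hNgr hex hsub with h | h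
        · refine htzx fun l hl => ?_
          have h1 := h l (hLN hl)
          have h2 : x • l = (x + w) • l - w • l := by rw [add_smul]; abel
          rw [h2]; exact K.sub_mem h1 (hwK l)
        · exact htzy fun l hl => h l (hLN hl)
      -- Claim 3 : r A s N = 0
      have claim3 : ∀ a : A, ∀ n ∈ N, (r * a * s) • n = 0 := by
        by_contra hcon
        push_neg at hcon
        obtain ⟨a, n, hn, hne⟩ := hcon
        have hexp : ∀ b : A, ∀ p ∈ N, ((x + r) * b * (y + s)) • p = (r * b * s) • p := by
          intro b p hp
          have h1 : (x + r) * b * (y + s) = x * b * y + x * b * s + r * b * y + r * b * s := by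
            noncomm_ring
          rw [h1, add_smul, add_smul, add_smul, claim0 b p hp, claim1 s hs hsK b p hp,
            claim2 r hr hrK b p hp]
          abel
        have hsub : ∀ b : A, ∀ p ∈ N, ((x + r) * b * (y + s)) • p ∈ K := by
          intro b p hp
          rw [hexp b p hp, mul_smul, mul_smul]
          exact hrK _
        have hex : ∃ b : A, ∃ p ∈ N, ((x + r) * b * (y + s)) • p ≠ 0 :=
          ⟨a, n, hn, by rw [hexp a n hn]; exact hne⟩
        rcases hKmain (x + r) (y + s) ⟨0, (𝒜 0).add_mem hx hr⟩ ⟨0, (𝒜 0).add_mem hy hs⟩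
          N hNgr hex hsub with h | h
        · refine htzx fun l hl => ?_
          have h1 := h l (hLN hl)
          have h2 : x • l = (x + r) • l - r • l := by rw [add_smul]; abel
          rw [h2]; exact K.sub_mem h1 (hrK l)
        · refine htzy fun l hl => ?_
          have h1 := h l (hLN hl)
          have h2 : y • l = (y + s) • l - s • l := by rw [add_smul]; abel
          rw [h2]; exact K.sub_mem h1 (hsK l)
      have hfin := claim3 1 (t • m') htmN
      rw [mul_one, mul_smul] at hfin
      rw [mul_smul, mul_smul]
      exact hfin
    have hdec := DirectSum.sum_support_decompose ℳ m
    rw [← hdec, Finset.smul_sum]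
    exact Finset.sum_eq_zero fun i _ => key i _ (SetLike.coe_mem _)
  exact ⟨main, fun hf r hr h1 s hs h2 t ht h3 =>
    hf _ (main r hr h1 s hs h2 t ht h3)⟩

end Theorems
end

section
/- Let M and S be G-graded A-modules. If K × S is a graded classical weakly prime A-submodule of M × S, then K is a graded classical weakly prime A-submodule of M. -/
section Theorems

variable {G : Type*} [AddGroup G] [DecidableEq G]
variable {A : Type*} [Ring A] {M : Type*} [AddCommGroup M] [Module A M]
variable (𝒜 : G → AddSubgroup A) (ℳ : G → AddSubgroup M)
variable [SetLike.GradedMonoid 𝒜] [SetLike.GradedSMul 𝒜 ℳ]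
variable [DirectSum.Decomposition 𝒜] [DirectSum.Decomposition ℳ]

theorem stmt15 {S : Type*} [AddCommGroup S] [Module A S] (𝒮 : G → AddSubgroup S)
    [SetLike.GradedSMul 𝒜 𝒮] [DirectSum.Decomposition 𝒮]
    (K : Submodule A M)
    (hK : IsGCWP 𝒜 (fun g => (ℳ g).prod (𝒮 g)) (K.prod (⊤ : Submodule A S))) :
    IsGCWP 𝒜 ℳ K := by
  obtain ⟨hne, hgr, hp⟩ := hK
  refine ⟨?_, ?_, ?_⟩
  · intro h
    apply hne
    ext ⟨m, s⟩
    simp [h]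
  · intro m hm
    have h2 : ((m, (0:S)) : M × S) ∈ Submodule.span A
        (((K.prod (⊤ : Submodule A S)) : Set (M × S)) ∩
          {p | SetLike.IsHomogeneousElem (fun g => (ℳ g).prod (𝒮 g)) p}) :=
      hgr ⟨hm, trivial⟩
    have h3 : m ∈ Submodule.map (LinearMap.fst A M S) (Submodule.span A
        (((K.prod (⊤ : Submodule A S)) : Set (M × S)) ∩
          {p | SetLike.IsHomogeneousElem (fun g => (ℳ g).prod (𝒮 g)) p})) :=
      ⟨(m, 0), h2, rfl⟩
    rw [Submodule.map_span] at h3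
    refine Submodule.span_mono ?_ h3
    rintro _ ⟨⟨a, b⟩, ⟨⟨haK, -⟩, g, hab⟩, rfl⟩
    exact ⟨haK, g, hab.1⟩
  · intro x y hx hy L hL hnz hsub
    -- embed L as L × ⊥ in M × S
    set L' : Submodule A (M × S) := L.prod (⊥ : Submodule A S) with hL'
    have hL'gr : IsGrSub (fun g => (ℳ g).prod (𝒮 g)) L' := by
      rintro ⟨m, s⟩ ⟨hm, hs⟩
      have hs0 : s = 0 := hs
      subst hs0
      have h2 : m ∈ Submodule.span A ((L : Set M) ∩ {m | SetLike.IsHomogeneousElem ℳ m}) :=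
        hL hm
      have h3 : ((m, (0:S)) : M × S) ∈ Submodule.map (LinearMap.inl A M S)
          (Submodule.span A ((L : Set M) ∩ {m | SetLike.IsHomogeneousElem ℳ m})) :=
        ⟨m, h2, rfl⟩
      rw [Submodule.map_span] at h3
      refine Submodule.span_mono ?_ h3
      rintro _ ⟨a, ⟨haL, g, ha⟩, rfl⟩
      exact ⟨⟨haL, rfl⟩, g, ha, (𝒮 g).zero_mem⟩
    have hnz' : ∃ a : A, ∃ l ∈ L', (x * a * y) • l ≠ 0 := by
      obtain ⟨a, l, hl, hne0⟩ := hnz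
      refine ⟨a, (l, 0), ⟨hl, rfl⟩, ?_⟩
      intro h
      exact hne0 (congrArg Prod.fst h)
    have hsub' : ∀ a : A, ∀ l ∈ L', (x * a * y) • l ∈ K.prod (⊤ : Submodule A S) := by
      rintro a ⟨m, s⟩ ⟨hm, -⟩
      exact ⟨hsub a m hm, trivial⟩
    rcases hp x y hx hy L' hL'gr hnz' hsub' with h | h
    · left
      intro l hl
      exact (h (l, 0) ⟨hl, rfl⟩).1
    · right
      intro l hl
      exact (h (l, 0) ⟨hl, rfl⟩).1

end Theorems
end

section
/- Let M and S be G-graded A-modules and suppose K × S is a graded classical weakly prime A-submodule of M × S. If (x, y, L) is a graded classical triple zero of K (in M), then xAy ⊆ Ann_A(S). -/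
section Theorems

variable {G : Type*} [AddGroup G] [DecidableEq G]
variable {A : Type*} [Ring A] {M : Type*} [AddCommGroup M] [Module A M]
variable (𝒜 : G → AddSubgroup A) (ℳ : G → AddSubgroup M)
variable [SetLike.GradedMonoid 𝒜] [SetLike.GradedSMul 𝒜 ℳ]
variable [DirectSum.Decomposition 𝒜] [DirectSum.Decomposition ℳ]

theorem stmt16 {S : Type*} [AddCommGroup S] [Module A S] (𝒮 : G → AddSubgroup S)
    [SetLike.GradedSMul 𝒜 𝒮] [DirectSum.Decomposition 𝒮]
    (K : Submodule A M)
    (hK : IsGCWP 𝒜 (fun g => (ℳ g).prod (𝒮 g)) (K.prod (⊤ : Submodule A S)))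
    (x y : A) (hx : SetLike.IsHomogeneousElem 𝒜 x) (hy : SetLike.IsHomogeneousElem 𝒜 y)
    (L : Submodule A M) (hL : IsGrSub ℳ L) (htz : TripleZero K x y L) :
    ∀ a : A, ∀ s : S, (x * a * y) • s = 0 := by
  classical
  intro a s
  by_contra hne
  obtain ⟨hKtop, hKgr, hprime⟩ := hK
  -- L × ⊤ is a graded submodule of M × S
  have hL' : IsGrSub (fun g => (ℳ g).prod (𝒮 g)) (L.prod (⊤ : Submodule A S)) := by
    rintro ⟨m, t⟩ ⟨hm, -⟩
    have hsplit : ((m, t) : M × S) = (m, 0) + (0, t) := by simp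
    rw [hsplit]
    apply Submodule.add_mem
    · -- (m, 0) via the map inl
      have h1 : ((m, 0) : M × S) ∈
          Submodule.map (LinearMap.inl A M S)
            (Submodule.span A ((L : Set M) ∩ {z | SetLike.IsHomogeneousElem ℳ z})) :=
        ⟨m, hL hm, rfl⟩
      rw [Submodule.map_span] at h1
      refine Submodule.span_mono ?_ h1
      rintro p ⟨z, ⟨hzL, g, hzg⟩, rfl⟩
      exact ⟨⟨hzL, trivial⟩, g, ⟨hzg, (𝒮 g).zero_mem⟩⟩
    · -- (0, t) via decomposition of t
      have ht : ((0, t) : M × S) =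
          ∑ g ∈ (DirectSum.decompose 𝒮 t).support,
            ((0, (DirectSum.decompose 𝒮 t g : S)) : M × S) := by
        have := DirectSum.sum_support_decompose 𝒮 t
        have h2 : ((0, t) : M × S) = LinearMap.inr A M S t := rfl
        conv_lhs => rw [h2, ← this, map_sum]
        rfl
      rw [ht]
      refine Submodule.sum_mem _ fun g _ => Submodule.subset_span ?_
      exact ⟨⟨L.zero_mem, trivial⟩, g, ⟨(ℳ g).zero_mem, (DirectSum.decompose 𝒮 t g).2⟩⟩
  have hnz : ∃ b : A, ∃ l ∈ L.prod (⊤ : Submodule A S), (x * b * y) • l ≠ 0 := by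
    refine ⟨a, ((0 : M), s), ⟨L.zero_mem, trivial⟩, ?_⟩
    intro h
    exact hne (congrArg Prod.snd h)
  have hsub : ∀ b : A, ∀ l ∈ L.prod (⊤ : Submodule A S),
      (x * b * y) • l ∈ K.prod (⊤ : Submodule A S) := by
    rintro b ⟨m, t⟩ ⟨hm, -⟩
    refine ⟨?_, trivial⟩
    show (x * b * y) • m ∈ K
    rw [htz.1 b m hm]
    exact K.zero_mem
  rcases hprime x y hx hy (L.prod ⊤) hL' hnz hsub with h | h
  · exact htz.2.1 fun l hl => (h ((l, 0)) ⟨hl, trivial⟩).1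
  · exact htz.2.2 fun l hl => (h ((l, 0)) ⟨hl, trivial⟩).1

end Theorems
end

section
/- Every graded maximal A-submodule of a graded A-module M is a graded prime A-submodule. -/
section Theorems

variable {G : Type*} [AddGroup G] [DecidableEq G]
variable {A : Type*} [Ring A] {M : Type*} [AddCommGroup M] [Module A M]
variable (𝒜 : G → AddSubgroup A) (ℳ : G → AddSubgroup M)
variable [SetLike.GradedMonoid 𝒜] [SetLike.GradedSMul 𝒜 ℳ]
variable [DirectSum.Decomposition 𝒜] [DirectSum.Decomposition ℳ]

theorem stmt17 (K : Submodule A M) (hKgr : IsGrSub ℳ K) (hKtop : K ≠ ⊤)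
    (hmax : ∀ L : Submodule A M, IsGrSub ℳ L → K < L → L = ⊤) :
    ∀ I : Ideal A, IsGrSub 𝒜 I → ∀ L : Submodule A M, IsGrSub ℳ L →
      (∀ r ∈ I, ∀ l ∈ L, r • l ∈ K) →
      L ≤ K ∨ (∀ r ∈ I, ∀ m : M, r • m ∈ K) := by
  intro I hIgr L hLgr hIL
  by_cases hLK : L ≤ K
  · exact Or.inl hLK
  · right
    have hlt : K < K ⊔ L := lt_of_le_of_ne le_sup_left (by
      intro h
      exact hLK (le_sup_right.trans h.symm.le))
    have hgr : IsGrSub ℳ (K ⊔ L) := by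
      apply sup_le
      · exact hKgr.trans (Submodule.span_mono (by
          intro m hm; exact ⟨Submodule.mem_sup_left hm.1, hm.2⟩))
      · exact hLgr.trans (Submodule.span_mono (by
          intro m hm; exact ⟨Submodule.mem_sup_right hm.1, hm.2⟩))
    have htop : K ⊔ L = ⊤ := hmax _ hgr hlt
    intro r hr m
    have hm : m ∈ K ⊔ L := htop ▸ Submodule.mem_top
    obtain ⟨k, hk, l, hl, rfl⟩ := Submodule.mem_sup.mp hm
    rw [smul_add]
    exact K.add_mem (K.smul_mem r hk) (hIL r hr l hl)

end Theorems
end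

section
/- Let M be a graded multiplication A-module. If every proper graded A-submodule of M is graded weakly prime, then M has at most two graded maximal A-submodules. -/
section Theorems

variable {G : Type*} [AddGroup G] [DecidableEq G]
variable {A : Type*} [Ring A] {M : Type*} [AddCommGroup M] [Module A M]
variable (𝒜 : G → AddSubgroup A) (ℳ : G → AddSubgroup M)
variable [SetLike.GradedMonoid 𝒜] [SetLike.GradedSMul 𝒜 ℳ]
variable [DirectSum.Decomposition 𝒜] [DirectSum.Decomposition ℳ]


set_option linter.unusedSectionVars false

/-- The `g`-component map as an additive hom. -/
def myCompHom (g : G) : M →+ M where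
  toFun x := (DirectSum.decompose ℳ x g : M)
  map_zero' := by simp
  map_add' x y := by simp [DirectSum.decompose_add, DirectSum.add_apply]

include 𝒜 in
lemma my_smul_comp_mem (K : Submodule A M) {m' : M} {g' : G} (hm' : m' ∈ ℳ g') (hmK : m' ∈ K)
    (a : A) (g : G) : (DirectSum.decompose ℳ (a • m') g : M) ∈ K := by
  classical
  show myCompHom ℳ g (a • m') ∈ K
  rw [← DirectSum.sum_support_decompose 𝒜 a, Finset.sum_smul, map_sum]
  apply Submodule.sum_mem
  intro h _
  show (DirectSum.decompose ℳ ((DirectSum.decompose 𝒜 a h : A) • m') g : M) ∈ K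
  have hmem : (DirectSum.decompose 𝒜 a h : A) • m' ∈ ℳ (h + g') := by
    simpa [vadd_eq_add] using
      SetLike.GradedSMul.smul_mem (SetLike.coe_mem ((DirectSum.decompose 𝒜 a) h)) hm'
  rcases eq_or_ne (h + g') g with he | he
  · rw [he] at hmem
    rw [DirectSum.decompose_of_mem_same ℳ hmem]
    exact K.smul_mem _ hmK
  · rw [DirectSum.decompose_of_mem_ne ℳ hmem he]
    exact K.zero_mem

include 𝒜 in
lemma my_grsub_iff (K : Submodule A M) :
    IsGrSub ℳ K ↔ ∀ (g : G) (m : M), m ∈ K → (DirectSum.decompose ℳ m g : M) ∈ K := by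
  classical
  constructor
  · intro hK g m hm
    have hsp := hK hm
    refine Submodule.span_induction (p := fun x _ => ∀ g : G, (DirectSum.decompose ℳ x g : M) ∈ K)
      ?_ ?_ ?_ ?_ hsp g
    · rintro x ⟨hxK, g₀, hx₀⟩ g
      rcases eq_or_ne g₀ g with he | he
      · rw [he] at hx₀; rw [DirectSum.decompose_of_mem_same ℳ hx₀]; exact hxK
      · rw [DirectSum.decompose_of_mem_ne ℳ hx₀ he]; exact K.zero_mem
    · intro g; simp only [DirectSum.decompose_zero, DirectSum.zero_apply,
        ZeroMemClass.coe_zero]; exact K.zero_mem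
    · intro x y _ _ ihx ihy g
      simp only [DirectSum.decompose_add, DirectSum.add_apply, AddSubgroup.coe_add]
      exact K.add_mem (ihx g) (ihy g)
    · intro a x _ ih g
      show myCompHom ℳ g (a • x) ∈ K
      rw [← DirectSum.sum_support_decompose ℳ x, Finset.smul_sum, map_sum]
      apply Submodule.sum_mem
      intro g' _
      exact my_smul_comp_mem 𝒜 ℳ K (SetLike.coe_mem _) (ih g') a g
  · intro h m hm
    rw [← DirectSum.sum_support_decompose ℳ m]
    apply Submodule.sum_mem
    intro g _
    exact Submodule.subset_span ⟨h g m hm, g, SetLike.coe_mem _⟩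

include 𝒜 in
lemma my_grsub_inf {X Y : Submodule A M} (hX : IsGrSub ℳ X) (hY : IsGrSub ℳ Y) :
    IsGrSub ℳ (X ⊓ Y) := by
  rw [my_grsub_iff 𝒜 ℳ] at hX hY ⊢
  exact fun g m hm => ⟨hX g m hm.1, hY g m hm.2⟩

lemma my_grsub_sup {X Y : Submodule A M} (hX : IsGrSub ℳ X) (hY : IsGrSub ℳ Y) :
    IsGrSub ℳ (X ⊔ Y) := by
  apply sup_le
  · exact hX.trans (Submodule.span_mono (fun z hz => ⟨Submodule.mem_sup_left hz.1, hz.2⟩))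
  · exact hY.trans (Submodule.span_mono (fun z hz => ⟨Submodule.mem_sup_right hz.1, hz.2⟩))

theorem stmt18
    (hmult : ∀ K : Submodule A M, IsGrSub ℳ K → ∃ I : Ideal A, IsGrSub 𝒜 I ∧
      K = Submodule.span A {z : M | ∃ r ∈ I, ∃ m : M, z = r • m})
    (hwp : ∀ K : Submodule A M, IsGrSub ℳ K → K ≠ ⊤ →
      ∀ I : Ideal A, IsGrSub 𝒜 I → ∀ L : Submodule A M, IsGrSub ℳ L →
        (∃ r ∈ I, ∃ l ∈ L, r • l ≠ 0) → (∀ r ∈ I, ∀ l ∈ L, r • l ∈ K) →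
        L ≤ K ∨ (∀ r ∈ I, ∀ m : M, r • m ∈ K)) :
    ∀ X Y Z : Submodule A M,
      (IsGrSub ℳ X ∧ X ≠ ⊤ ∧ ∀ L : Submodule A M, IsGrSub ℳ L → X < L → L = ⊤) →
      (IsGrSub ℳ Y ∧ Y ≠ ⊤ ∧ ∀ L : Submodule A M, IsGrSub ℳ L → Y < L → L = ⊤) →
      (IsGrSub ℳ Z ∧ Z ≠ ⊤ ∧ ∀ L : Submodule A M, IsGrSub ℳ L → Z < L → L = ⊤) →
      X = Y ∨ X = Z ∨ Y = Z := by
  intro X Y Z hX hY hZ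
  obtain ⟨hXg, hXt, hXm⟩ := hX
  obtain ⟨hYg, hYt, hYm⟩ := hY
  obtain ⟨hZg, hZt, hZm⟩ := hZ
  by_contra hcon
  push_neg at hcon
  obtain ⟨hXY, hXZ, hYZ⟩ := hcon
  have incomp : ∀ P Q : Submodule A M, IsGrSub ℳ Q → Q ≠ ⊤ →
      (∀ L : Submodule A M, IsGrSub ℳ L → P < L → L = ⊤) → P ≠ Q → ¬ (P ≤ Q) := by
    intro P Q hQg hQt hPm hne hle
    exact hQt (hPm Q hQg (lt_of_le_of_ne hle hne))
  obtain ⟨IZ, hIZg, hZeq⟩ := hmult Z hZg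
  have hZsub : ∀ r ∈ IZ, ∀ m : M, r • m ∈ Z := by
    intro r hr m
    rw [hZeq]
    exact Submodule.subset_span ⟨r, hr, m, rfl⟩
  have key : ∀ Q : Submodule A M, IsGrSub ℳ Q → Q ≠ ⊤ →
      (∀ L : Submodule A M, IsGrSub ℳ L → Q < L → L = ⊤) → Z ≠ Q →
      ∀ r ∈ IZ, ∀ l ∈ Q, r • l = 0 := by
    intro Q hQg hQt hQm hne
    by_contra hz
    push_neg at hz
    obtain ⟨r, hr, l, hl, hrl⟩ := hz
    have hKg : IsGrSub ℳ (Z ⊓ Q) := my_grsub_inf 𝒜 ℳ hZg hQg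
    have hKt : Z ⊓ Q ≠ ⊤ := by
      intro h
      exact hZt (top_le_iff.mp (h ▸ inf_le_left))
    rcases hwp (Z ⊓ Q) hKg hKt IZ hIZg Q hQg ⟨r, hr, l, hl, hrl⟩
        (fun r hr l hl => ⟨hZsub r hr l, Q.smul_mem r hl⟩) with h | h
    · exact incomp Q Z hZg hZt hQm (Ne.symm hne) (h.trans inf_le_left)
    · have hZQ : Z ≤ Q := by
        rw [hZeq]
        apply Submodule.span_le.mpr
        rintro z ⟨r, hr, m, rfl⟩
        exact (h r hr m).2
      exact incomp Z Q hQg hQt hZm hne hZQ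
  have zX := key X hXg hXt hXm (Ne.symm hXZ)
  have zY := key Y hYg hYt hYm (Ne.symm hYZ)
  have hsupg : IsGrSub ℳ (X ⊔ Y) := my_grsub_sup ℳ hXg hYg
  have hlt : X < X ⊔ Y := by
    refine lt_of_le_of_ne le_sup_left (fun h => ?_)
    exact incomp Y X hXg hXt hYm (Ne.symm hXY) (le_sup_right.trans h.ge)
  have htop : X ⊔ Y = ⊤ := hXm (X ⊔ Y) hsupg hlt
  have hz : ∀ r ∈ IZ, ∀ m : M, r • m = 0 := by
    intro r hr m
    have hmem : m ∈ X ⊔ Y := htop ▸ Submodule.mem_top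
    obtain ⟨x, hx, y, hy, rfl⟩ := Submodule.mem_sup.mp hmem
    rw [smul_add, zX r hr x hx, zY r hr y hy, add_zero]
  have hZbot : Z = ⊥ := by
    rw [hZeq]
    apply le_bot_iff.mp
    apply Submodule.span_le.mpr
    rintro z ⟨r, hr, m, rfl⟩
    simpa using hz r hr m
  have hbotX : ⊥ < X := bot_lt_iff_ne_bot.mpr (fun h => hXZ (h.trans hZbot.symm))
  exact hXt (hZm X hXg (hZbot ▸ hbotX))


end Theorems
end

section
/- Let A be a graded left Duo ring, M a graded A-module, and K a graded classical weakly prime A-submodule of M. If x, y are homogeneous elements of A and m a homogeneous element of M with 0 ≠ xym ∈ K, then xm ∈ K or ym ∈ K (i.e., K is graded completely classical weakly prime). -/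
section Theorems

variable {G : Type*} [AddGroup G] [DecidableEq G]
variable {A : Type*} [Ring A] {M : Type*} [AddCommGroup M] [Module A M]
variable (𝒜 : G → AddSubgroup A) (ℳ : G → AddSubgroup M)
variable [SetLike.GradedMonoid 𝒜] [SetLike.GradedSMul 𝒜 ℳ]
variable [DirectSum.Decomposition 𝒜] [DirectSum.Decomposition ℳ]

theorem stmt19 (hduo : ∀ I : Ideal A, ∀ r ∈ I, ∀ a : A, r * a ∈ I)
    (K : Submodule A M) (hK : IsGCWP 𝒜 ℳ K)
    (x y : A) (hx : SetLike.IsHomogeneousElem 𝒜 x) (hy : SetLike.IsHomogeneousElem 𝒜 y)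
    (m : M) (hm : SetLike.IsHomogeneousElem ℳ m)
    (hne : (x * y) • m ≠ 0) (hmem : (x * y) • m ∈ K) :
    x • m ∈ K ∨ y • m ∈ K := by
  have key := hK.2.2 x y hx hy (Submodule.span A {m}) ?_ ?_ ?_
  · have hmL : m ∈ Submodule.span A {m} := Submodule.mem_span_singleton_self m
    rcases key with h | h
    · exact Or.inl (h m hmL)
    · exact Or.inr (h m hmL)
  · intro z hz
    have hle : Submodule.span A {m} ≤
        Submodule.span A ((Submodule.span A {m} : Set M) ∩ {m | SetLike.IsHomogeneousElem ℳ m}) := by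
      rw [Submodule.span_le]
      intro w hw
      rw [Set.mem_singleton_iff] at hw
      subst hw
      exact Submodule.subset_span ⟨Submodule.mem_span_singleton_self w, hm⟩
    exact hle hz
  · exact ⟨1, m, Submodule.mem_span_singleton_self m, by simpa using hne⟩
  · intro a l hl
    rcases Submodule.mem_span_singleton.mp hl with ⟨c, rfl⟩
    have h1 : x * a ∈ Ideal.span {x} :=
      hduo (Ideal.span {x}) x (Ideal.subset_span (Set.mem_singleton x)) a
    rcases Ideal.mem_span_singleton'.mp h1 with ⟨b, hb⟩
    have h2 : x * y * c ∈ Ideal.span {x * y} :=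
      hduo (Ideal.span {x * y}) (x * y) (Ideal.subset_span (Set.mem_singleton (x * y))) c
    rcases Ideal.mem_span_singleton'.mp h2 with ⟨d, hd⟩
    have heq : (x * a * y) • (c • m) = (b * d) • ((x * y) • m) := by
      rw [smul_smul, smul_smul]
      congr 1
      rw [← hb, mul_assoc b x y, mul_assoc b (x * y) c, ← hd, ← mul_assoc]
    rw [heq]
    exact K.smul_mem _ hmem

end Theorems
end
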